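/- Let Λ and X be complete metric spaces, let S_λ(·,·), λ ∈ Λ, be a family of processes on X, and let K be a compact subset of X. Assume that for every s ∈ ℝ and t ≥ s the map λ ↦ S_λ(t,s)x is continuous, uniformly for x in compact subsets of X. Then for every s ∈ ℝ and t ≥ s, the mapping (λ, B) ↦ S_λ(t,s)B is jointly continuous on Λ × CB(K), where CB(K) is the space of nonempty closed (hence compact) subsets of K with the Hausdorff metric, and the image S_λ(t,s)B is taken as an element of the nonempty compact subsets of X with the Hausdorff metric. -/

import Mathlib

open Filter Topology Metric Bornology

/-- A process on a metric space `X`: a two-parameter family `S t s : X → X` (`t ≥ s`)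
with `S t t = id`, `S t τ ∘ S τ s = S t s` for `t ≥ τ ≥ s`, and `(t, s, x) ↦ S t s x`
continuous on the region `s ≤ t`. -/
def IsProcess {X : Type*} [MetricSpace X] (S : ℝ → ℝ → X → X) : Prop :=
  (∀ t : ℝ, S t t = id) ∧
  (∀ t τ s : ℝ, s ≤ τ → τ ≤ t → S t τ ∘ S τ s = S t s) ∧
  ContinuousOn (fun p : ℝ × ℝ × X => S p.1 p.2.1 p.2.2) {p : ℝ × ℝ × X | p.2.1 ≤ p.1}

/-- Joint continuity of `(λ, B) ↦ S_λ(t,s)B` on `Λ × CB(K)` for a compact `K ⊆ X`,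
where `CB(K)` is the collection of nonempty closed subsets of `K` with the Hausdorff
metric, assuming `λ ↦ S_λ(t,s)x` is continuous uniformly for `x` in compact sets. -/
theorem stmt6 {Λ X : Type*} [MetricSpace Λ] [CompleteSpace Λ]
    [MetricSpace X] [CompleteSpace X]
    (S : Λ → ℝ → ℝ → X → X) (hproc : ∀ l : Λ, IsProcess (S l))
    (K : Set X) (hK : IsCompact K)
    (hL3' : ∀ s t : ℝ, s ≤ t → ∀ C : Set X, IsCompact C → ∀ l₀ : Λ, ∀ ε : ℝ, 0 < ε →
      ∃ δ : ℝ, 0 < δ ∧ ∀ l : Λ, dist l l₀ < δ → ∀ x ∈ C,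
        dist (S l t s x) (S l₀ t s x) < ε) :
    ∀ s t : ℝ, s ≤ t →
      ∀ (l₀ : Λ) (B₀ : Set X), IsClosed B₀ → B₀.Nonempty → B₀ ⊆ K →
        ∀ ε : ℝ, 0 < ε → ∃ δ : ℝ, 0 < δ ∧
          ∀ (l : Λ) (B : Set X), IsClosed B → B.Nonempty → B ⊆ K →
            dist l l₀ < δ → hausdorffDist B B₀ < δ →
            hausdorffDist (S l t s '' B) (S l₀ t s '' B₀) < ε := by
  intro s t hst l₀ B₀ hB₀c hB₀ne hB₀K ε hε
  set f : X → X := S l₀ t s with hf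
  have hε3 : 0 < ε / 3 := by linarith
  -- continuity of f
  have hfc : Continuous f := by
    have h3 := (hproc l₀).2.2
    have hg : Continuous (fun x : X => ((t, s, x) : ℝ × ℝ × X)) := by
      fun_prop
    have hmaps : Set.MapsTo (fun x : X => ((t, s, x) : ℝ × ℝ × X)) Set.univ
        {p : ℝ × ℝ × X | p.2.1 ≤ p.1} := fun x _ => hst
    have := h3.comp hg.continuousOn hmaps
    exact continuousOn_univ.mp this
  -- uniform continuity of f on K
  have hucf : UniformContinuousOn f K :=
    hK.uniformContinuousOn_of_continuous hfc.continuousOn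
  rw [Metric.uniformContinuousOn_iff] at hucf
  obtain ⟨δ₁, hδ₁, h₁⟩ := hucf (ε / 3) hε3
  -- uniformity in λ on K
  obtain ⟨δ₂, hδ₂, h₂⟩ := hL3' s t hst K hK l₀ (ε / 3) hε3
  refine ⟨min δ₁ δ₂, lt_min hδ₁ hδ₂, ?_⟩
  intro l B hBc hBne hBK hl hB
  have hl' : dist l l₀ < δ₂ := hl.trans_le (min_le_right _ _)
  have hB' : hausdorffDist B B₀ < δ₁ := hB.trans_le (min_le_left _ _)
  have hfin : EMetric.hausdorffEdist B B₀ ≠ ⊤ :=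
    Metric.hausdorffEdist_ne_top_of_nonempty_of_bounded hBne hB₀ne
      (hK.isBounded.subset hBK) (hK.isBounded.subset hB₀K)
  have key : hausdorffDist (S l t s '' B) (f '' B₀) ≤ 2 * (ε / 3) := by
    apply Metric.hausdorffDist_le_of_mem_dist (by positivity)
    · rintro a ⟨x, hx, rfl⟩
      obtain ⟨y, hy, hxy⟩ := Metric.exists_dist_lt_of_hausdorffDist_lt hx hB' hfin
      refine ⟨f y, Set.mem_image_of_mem f hy, ?_⟩
      have d1 : dist (S l t s x) (f x) < ε / 3 := h₂ l hl' x (hBK hx)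
      have d2 : dist (f x) (f y) < ε / 3 := h₁ x (hBK hx) y (hB₀K hy) hxy
      calc dist (S l t s x) (f y) ≤ dist (S l t s x) (f x) + dist (f x) (f y) :=
            dist_triangle _ _ _
        _ ≤ 2 * (ε / 3) := by linarith
    · rintro b ⟨y, hy, rfl⟩
      obtain ⟨x, hx, hyx⟩ := Metric.exists_dist_lt_of_hausdorffDist_lt hy
        (by rwa [Metric.hausdorffDist_comm] at hB')
        (by rw [EMetric.hausdorffEdist_comm]; exact hfin)
      refine ⟨S l t s x, Set.mem_image_of_mem _ hx, ?_⟩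
      have d1 : dist (S l t s x) (f x) < ε / 3 := h₂ l hl' x (hBK hx)
      have d2 : dist (f y) (f x) < ε / 3 := h₁ y (hB₀K hy) x (hBK hx) hyx
      calc dist (f y) (S l t s x) ≤ dist (f y) (f x) + dist (f x) (S l t s x) :=
            dist_triangle _ _ _
        _ ≤ 2 * (ε / 3) := by rw [dist_comm (f x)] ; linarith
  calc hausdorffDist (S l t s '' B) (S l₀ t s '' B₀) ≤ 2 * (ε / 3) := key
    _ < ε := by linarith
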